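/- Let $Y$ be a PGF with $Y'(1) < 1$, $y_0 > 0$, $t_0 > 1$, and let $\epsilon \in (0, t_0 - 1)$. For all complex $z$ with $|z| = 1+\epsilon$ and real $w \in [0,1]$, the value $Q(z,w) = \frac{wY(z) - zY(w)}{Y(z) - z}$ is well-defined (i.e. $Y(z) \ne z$) and does not lie in the interval $(-\infty, 0]$. -/

import Mathlib

open Set
set_option maxHeartbeats 1000000

lemma aux_pow_ineq (t : ℝ) (ht : 1 ≤ t) : ∀ k : ℕ, 1 ≤ k → t ^ k - t ≤ ((k:ℝ) - 1) * (1 - 1/t) * t ^ k := by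
  have ht0 : (0:ℝ) < t := by linarith
  have hinv : 1/t ≤ 1 := by rw [div_le_one ht0]; exact ht
  intro k hk
  induction k, hk using Nat.le_induction with
  | base => simp
  | succ k hk ih =>
    have h1 : t^2 ≤ t^(k+1) := pow_le_pow_right₀ ht (by omega)
    have h2 : (1:ℝ) ≤ t^k := one_le_pow₀ ht
    have hps : t ^ (k+1) = t * t ^ k := by ring
    push_cast
    calc t^(k+1) - t = t * (t^k - t) + (t^2 - t) := by ring
      _ ≤ t * (((k:ℝ)-1)*(1-1/t)*t^k) + (1-1/t)*t^2 := by
          have : (1-1/t)*t^2 = t^2 - t := by field_simp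
          nlinarith [mul_le_mul_of_nonneg_left ih (le_of_lt ht0)]
      _ = ((k:ℝ)-1)*(1-1/t)*t^(k+1) + (1-1/t)*t^2 := by rw [hps]; ring
      _ ≤ ((k:ℝ)+1-1)*(1-1/t)*t^(k+1) := by
          have key : 0 ≤ (1 - 1/t) * (t^(k+1) - t^2) :=
            mul_nonneg (by linarith) (by linarith)
          nlinarith [key]

lemma aux_one_sub_pow (w : ℝ) (hw0 : 0 ≤ w) (hw1 : w ≤ 1) (k : ℕ) :
    1 - w ^ k ≤ (k:ℝ) * (1 - w) := by
  induction k with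
  | zero => simp
  | succ k ih =>
    have hwk : w ^ k ≤ 1 := pow_le_one₀ hw0 hw1
    push_cast
    calc 1 - w^(k+1) = (1 - w) + w * (1 - w^k) := by ring
      _ ≤ (1 - w) + (k:ℝ)*(1-w) := by nlinarith
      _ = ((k:ℝ)+1)*(1-w) := by ring

/-- for `|z| = 1+ε` (with `0 < ε < t₀-1`) and real `w ∈ [0,1]`,
`Q(z,w) = (wY(z)-zY(w))/(Y(z)-z)` is well defined (`Y(z) ≠ z`) and avoids
the half-line `(-∞,0]`. -/
theorem fctl_Q_avoids_negatives (y : ℕ → ℝ) (R : ℝ) (hR : 1 < R)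
    (hy : ∀ k, 0 ≤ y k) (hy0 : 0 < y 0)
    (hconv : ∀ z : ℂ, ‖z‖ < R → Summable (fun k : ℕ => (y k : ℂ) * z ^ k))
    (hconv' : ∀ t : ℝ, 0 < t → t < R →
      Summable (fun k : ℕ => (k : ℝ) * y k * t ^ (k - 1)))
    (hY1 : ∑' k : ℕ, y k = 1) (hY'1 : ∑' k : ℕ, (k : ℝ) * y k < 1)
    (t0 : ℝ)
    (ht0 : t0 = sSup {t : ℝ | t ∈ Ioo 0 R ∧
      (∑' k : ℕ, (k : ℝ) * y k * t ^ (k - 1)) * t - (∑' k : ℕ, y k * t ^ k) ≤ 0})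
    (ht0gt : 1 < t0)
    (ε : ℝ) (hε : 0 < ε) (hεt0 : ε < t0 - 1)
    (z : ℂ) (hz : ‖z‖ = 1 + ε)
    (w : ℝ) (hw0 : 0 ≤ w) (hw1 : w ≤ 1) :
    (∑' k : ℕ, (y k : ℂ) * z ^ k) ≠ z ∧
    ∀ a : ℝ, a ≤ 0 →
      ((w : ℂ) * (∑' k : ℕ, (y k : ℂ) * z ^ k) - z * (∑' k : ℕ, (y k : ℂ) * (w : ℂ) ^ k)) /
        ((∑' k : ℕ, (y k : ℂ) * z ^ k) - z) ≠ (a : ℂ) := by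
  set u : ℝ := 1 + ε with hud
  have hu1 : 1 < u := by simp [hud]; linarith
  have hu0 : (0:ℝ) < u := by linarith
  -- summability lemmas
  have sum1 : ∀ r : ℝ, 0 ≤ r → r < R → Summable (fun k : ℕ => y k * r ^ k) := by
    intro r hr0 hrR
    have h := hconv (r : ℂ) (by rwa [Complex.norm_real, Real.norm_eq_abs, abs_of_nonneg hr0])
    have : (fun k : ℕ => ((y k * r ^ k : ℝ) : ℂ)) = fun k : ℕ => (y k : ℂ) * (r : ℂ) ^ k := by
      funext k; push_cast; ring
    exact Complex.summable_ofReal.mp (by rw [this]; exact h)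
  have sumy : Summable y := by
    have := sum1 1 zero_le_one hR
    simpa using this
  have sum3 : ∀ r : ℝ, 0 < r → r < R → Summable (fun k : ℕ => (k:ℝ) * y k * r ^ k) := by
    intro r hr0 hrR
    have h := (hconv' r hr0 hrR).mul_right r
    refine h.congr fun k => ?_
    cases k with
    | zero => simp
    | succ n => simp [pow_succ]; ring
  have sumg : ∀ r : ℝ, 0 < r → r < R → Summable (fun k : ℕ => ((k:ℝ) - 1) * y k * r ^ k) := by
    intro r hr0 hrR
    have := (sum3 r hr0 hrR).sub (sum1 r hr0.le hrR)
    refine this.congr fun k => ?_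
    ring
  -- g(r) rewriting
  have grw : ∀ r : ℝ, 0 < r → r < R →
      (∑' k : ℕ, (k : ℝ) * y k * r ^ (k - 1)) * r - (∑' k : ℕ, y k * r ^ k)
        = ∑' k : ℕ, ((k:ℝ) - 1) * y k * r ^ k := by
    intro r hr0 hrR
    rw [← tsum_mul_right, ← Summable.tsum_sub ((hconv' r hr0 hrR).mul_right r) (sum1 r hr0.le hrR)]
    refine tsum_congr fun k => ?_
    cases k with
    | zero => simp
    | succ n => simp [pow_succ]; ring
  -- t0 facts
  set S : Set ℝ := {t : ℝ | t ∈ Ioo 0 R ∧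
      (∑' k : ℕ, (k : ℝ) * y k * t ^ (k - 1)) * t - (∑' k : ℕ, y k * t ^ k) ≤ 0} with hSd
  have hSne : S.Nonempty := by
    by_contra h
    rw [not_nonempty_iff_eq_empty] at h
    rw [ht0, h, Real.sSup_empty] at ht0gt
    linarith
  have ht0R : t0 ≤ R := ht0 ▸ csSup_le hSne (fun s hs => hs.1.2.le)
  have huR : u < R := by linarith
  have hut0 : u < t0 := by linarith
  -- find s ∈ S with u < s
  obtain ⟨s, hsS, hus⟩ : ∃ s ∈ S, u < s := by
    by_contra h
    push_neg at h
    have : t0 ≤ u := ht0 ▸ csSup_le hSne h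
    linarith
  have hs0 : (0:ℝ) < s := hsS.1.1
  have hsR : s < R := hsS.1.2
  -- g(u) ≤ 0
  have hgu : (∑' k : ℕ, ((k:ℝ) - 1) * y k * u ^ k) ≤ 0 := by
    have hgs : (∑' k : ℕ, ((k:ℝ) - 1) * y k * s ^ k) ≤ 0 := by
      rw [← grw s hs0 hsR]; exact hsS.2
    refine le_trans (le_trans ?_ (le_of_eq rfl)) hgs
    refine Summable.tsum_le_tsum (fun k => ?_) (sumg u hu0 huR) (sumg s hs0 hsR)
    cases k with
    | zero => simp
    | succ n =>
      have : u ^ (n+1) ≤ s ^ (n+1) := pow_le_pow_left₀ hu0.le hus.le (n+1)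
      have hk1 : (0:ℝ) ≤ (n+1:ℕ) - 1 := by push_cast; linarith
      exact mul_le_mul_of_nonneg_left this (mul_nonneg hk1 (hy _))
  -- F(u) < u
  set Fu : ℝ := ∑' k : ℕ, y k * u ^ k with hFud
  have hFu : Fu < u := by
    set c : ℕ → ℝ := fun k => (1 - 1/u) * (((k:ℝ) - 1) * y k * u ^ k) - y k * (u ^ k - u) with hcd
    have hsumc : Summable c := by
      have h1 := (sumg u hu0 huR).mul_left (1 - 1/u)
      have h2 := (sum1 u hu0.le huR).sub (sumy.mul_right u)
      refine (h1.sub h2).congr fun k => ?_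
      simp [hcd]; ring
    have hc0 : c 0 = y 0 * (u - 2 + 1/u) := by simp [hcd]; ring
    have hcpos : ∀ k : ℕ, 0 ≤ c k := by
      intro k
      cases k with
      | zero =>
        rw [hc0]
        have h3 : 0 < u - 2 + 1/u := by
          have h4 : (u-1)^2 / u > 0 := div_pos (pow_pos (by linarith) 2) hu0
          have he : (u-1)^2 / u = u - 2 + 1/u := by field_simp; ring
          linarith [he ▸ h4]
        exact le_of_lt (mul_pos hy0 h3)
      | succ n =>
        have h := aux_pow_ineq u hu1.le (n+1) (by omega)
        have := mul_le_mul_of_nonneg_left h (hy (n+1))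
        simp only [hcd]
        push_cast at this ⊢
        nlinarith
    have hle : c 0 ≤ ∑' k, c k := Summable.le_tsum hsumc 0 (fun j _ => hcpos j)
    have hcsum : ∑' k, c k = (1 - 1/u) * (∑' k : ℕ, ((k:ℝ) - 1) * y k * u ^ k) - (Fu - u) := by
      have h1 := (sumg u hu0 huR).mul_left (1 - 1/u)
      have h2 := (sum1 u hu0.le huR).sub (sumy.mul_right u)
      have h3 : ∑' k, c k = ∑' k : ℕ, ((1 - 1/u) * (((k:ℝ) - 1) * y k * u ^ k) - (y k * u ^ k - y k * u)) :=
        tsum_congr (fun k => by simp [hcd]; ring)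
      rw [h3]
      rw [Summable.tsum_sub h1 h2, tsum_mul_left, Summable.tsum_sub (sum1 u hu0.le huR) (sumy.mul_right u),
        tsum_mul_right, hY1, hFud]
      ring
    have hfac : 0 ≤ 1 - 1/u := by
      have : 1/u < 1 := by rw [div_lt_one hu0]; exact hu1
      linarith
    have hc0pos : 0 < c 0 := by
      rw [hc0]
      have he : (u-1)^2 / u = u - 2 + 1/u := by field_simp; ring
      have h4 : 0 < (u-1)^2 / u := div_pos (pow_pos (by linarith) 2) hu0
      nlinarith
    nlinarith [mul_nonpos_of_nonneg_of_nonpos hfac hgu, hcsum ▸ hle]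
  -- Step D: |Yz| ≤ Fu < u
  set Yz : ℂ := ∑' k : ℕ, (y k : ℂ) * z ^ k with hYzd
  have hnorm : ∀ k : ℕ, ‖(y k : ℂ) * z ^ k‖ = y k * u ^ k := by
    intro k
    rw [norm_mul, norm_pow, Complex.norm_real, hz,
      Real.norm_eq_abs, abs_of_nonneg (hy k)]
  have hsn : Summable (fun k : ℕ => ‖(y k : ℂ) * z ^ k‖) :=
    (sum1 u hu0.le huR).congr fun k => (hnorm k).symm
  have habs : ‖Yz‖ ≤ Fu := by
    calc ‖Yz‖ = ‖Yz‖ := rfl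
      _ ≤ ∑' k : ℕ, ‖(y k : ℂ) * z ^ k‖ := norm_tsum_le_tsum_norm hsn
      _ = Fu := by rw [hFud]; exact tsum_congr hnorm
  have hzne : Yz ≠ z := by
    intro h
    have : ‖Yz‖ = u := by rw [h, hz]
    linarith [this ▸ habs]
  -- Step E: W bounds
  set W : ℝ := ∑' k : ℕ, y k * w ^ k with hWd
  have hwR : w < R := by linarith
  have hsumw : Summable (fun k : ℕ => y k * w ^ k) := sum1 w hw0 hwR
  have hW0 : y 0 ≤ W := by
    have := Summable.le_tsum hsumw 0 (fun j _ => mul_nonneg (hy j) (pow_nonneg hw0 j))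
    simpa [hWd] using this
  have hsk : Summable (fun k : ℕ => (k:ℝ) * y k) := by
    have := hconv' 1 one_pos hR
    simpa using this
  have hWw : w ≤ W := by
    have h5 : (∑' k : ℕ, (y k - y k * w ^ k)) ≤ ∑' k : ℕ, (1 - w) * ((k:ℝ) * y k) := by
      refine Summable.tsum_le_tsum (fun k => ?_) (sumy.sub hsumw) (hsk.mul_left _)
      have h6 := aux_one_sub_pow w hw0 hw1 k
      have h7 := mul_le_mul_of_nonneg_left h6 (hy k)
      nlinarith
    rw [Summable.tsum_sub sumy hsumw, hY1, tsum_mul_left] at h5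
    have h8 : (1 - w) * (∑' k : ℕ, (k:ℝ) * y k) ≤ (1 - w) * 1 :=
      mul_le_mul_of_nonneg_left hY'1.le (by linarith)
    rw [hWd]
    linarith
  -- cast of Y(w)
  have hWc : (∑' k : ℕ, (y k : ℂ) * (w : ℂ) ^ k) = (W : ℂ) := by
    rw [hWd, Complex.ofReal_tsum]
    exact tsum_congr fun k => by push_cast; ring
  -- conclusion
  refine ⟨hzne, ?_⟩
  intro a ha heq
  have hd : Yz - z ≠ 0 := sub_ne_zero.mpr hzne
  rw [div_eq_iff hd, hWc] at heq
  have key : ((w - a : ℝ) : ℂ) * Yz = z * ((W - a : ℝ) : ℂ) := by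
    push_cast
    linear_combination heq
  by_cases hwa : w = a
  · have hweq : w = 0 := le_antisymm (hwa ▸ ha) hw0
    have hz0 : z ≠ 0 := by
      intro h
      rw [h] at hz
      simp at hz
      linarith
    have hWne : (W : ℂ) - (a : ℂ) ≠ 0 := by
      have : (0:ℝ) < W - a := by linarith [hW0]
      intro h
      have := congrArg Complex.re h
      push_cast at this
      simp at this
      linarith
    have : ((w - a : ℝ) : ℂ) = 0 := by rw [hwa]; simp
    rw [this, zero_mul] at key
    have : z * ((W - a : ℝ) : ℂ) ≠ 0 := mul_ne_zero hz0 (by push_cast at hWne ⊢; exact hWne)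
    exact this key.symm
  · have hwa' : 0 < w - a := lt_of_le_of_ne (by linarith) (fun h => hwa (by linarith))
    have hWa : 0 < W - a := by linarith [hW0]
    have habs2 : (w - a) * ‖Yz‖ = u * (W - a) := by
      have h9 := congrArg (‖·‖) key
      rwa [norm_mul, norm_mul, Complex.norm_real, Complex.norm_real, hz, Real.norm_eq_abs, Real.norm_eq_abs,
        abs_of_pos hwa', abs_of_pos hWa] at h9
    have h10 : u * (w - a) ≤ u * (W - a) := mul_le_mul_of_nonneg_left (by linarith) hu0.le
    nlinarith [habs2, hwa', habs, hFu, h10]
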